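/- If w : ℕ → ℕ is eventually different from s (agreement set of finite size k), then w is determined by the correctness counts with all finite variations of s: specifically, for each position m, w m = a iff changing s at position m to a yields agreement count k+1 (when s m ≠ a and s m ≠ w m) or keeps count k (when s m = a = w m); hence w is recoverable from these counts. -/

import Mathlib

lemma var_set (s w : ℕ → ℕ) (m a : ℕ) :
    {n : ℕ | Function.update s m a n = w n} =
      ({n | s n = w n} \ {m}) ∪ (if w m = a then {m} else ∅) := by
  ext n
  by_cases h : n = m
  · subst h
    by_cases h2 : w n = a <;> simp [Function.update_self, h2] <;> omega
  · simp [Function.update_of_ne h, h]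

lemma mk_eq_ncard {A B : Set ℕ} (hA : A.Finite) (h : Cardinal.mk A = Cardinal.mk B) :
    B.Finite ∧ A.ncard = B.ncard := by
  have hB : B.Finite := by
    rw [← Cardinal.lt_aleph0_iff_set_finite] at hA ⊢
    rwa [← h]
  refine ⟨hB, ?_⟩
  have := congrArg Cardinal.toNat h
  simpa [← Nat.card_coe_set_eq, Nat.card] using this

theorem determined_by_counts_on_finite_variations (s w : ℕ → ℕ) (k : ℕ)
    (hfin : {n : ℕ | s n = w n}.Finite) (hk : {n : ℕ | s n = w n}.ncard = k) :
    (∀ m a : ℕ, s m ≠ a → s m ≠ w m →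
      (w m = a ↔ {n : ℕ | Function.update s m a n = w n}.ncard = k + 1)) ∧
    (∀ m : ℕ, s m = w m →
      {n : ℕ | Function.update s m (s m) n = w n}.ncard = k) ∧
    ∀ w' : ℕ → ℕ,
      (∀ m a : ℕ,
        Cardinal.mk {n : ℕ | Function.update s m a n = w n} =
          Cardinal.mk {n : ℕ | Function.update s m a n = w' n}) →
      w = w' := by
  refine ⟨?_, ?_, ?_⟩
  · intro m a hsa hsw
    have hm : m ∉ {n | s n = w n} := hsw
    have hd : {n | s n = w n} \ {m} = {n | s n = w n} :=
      Set.diff_singleton_eq_self hm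
    constructor
    · intro hwa
      rw [var_set, if_pos hwa, hd]
      rw [Set.union_singleton, Set.ncard_insert_of_notMem hm hfin, hk]
    · intro hc
      by_contra hwa
      rw [var_set, if_neg hwa, hd, Set.union_empty, hk] at hc
      omega
  · intro m _
    simp [Function.update_eq_self, hk]
  · intro w' hcards
    funext m
    by_contra hne
    set a' := w m + w' m + 1 with ha'
    have h1 := hcards m a'
    have h2 := hcards m (w m)
    rw [var_set, var_set, if_neg (by omega), if_neg (by omega),
      Set.union_empty, Set.union_empty] at h1
    rw [var_set, var_set, if_pos rfl, if_neg (fun h => hne h.symm),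
      Set.union_singleton, Set.union_empty] at h2
    have hAfin : ({n | s n = w n} \ {m}).Finite := hfin.diff
    obtain ⟨hTfin, hT⟩ := mk_eq_ncard hAfin h1
    obtain ⟨_, hT2⟩ := mk_eq_ncard (hAfin.insert m) h2
    rw [Set.ncard_insert_of_notMem (by simp) hAfin] at hT2
    omega
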